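/- Let x₀ > 0, let q : [0,x₀] → ℝ be continuous and nonnegative, let z > 0, and let φ be the Prüfer angle of q at z with Prüfer radius r(x) = exp(∫₀ˣ (q(t)/z)·sin(φ(t))·cos(φ(t)) dt). Let i ≥ 0 be an integer, D ∈ [0,π], and let a ≤ b be points of (0,x₀] with φ(a) = iπ + π/2 and φ(b) = iπ + π/2 + D. Then ∫ₐᵇ r(x)²·(q(x)/z)·(sin²φ(x) − φ(x)·sinφ(x)·cosφ(x)) dx ≥ r(b)²·[ ∫ₐᵇ (q(x)/z)·(sin²φ(x) − φ(x)·sinφ(x)·cosφ(x)) dx − 2·∫ₐᵇ (q(x)/z)·sinφ(x)·cosφ(x)·( ∫ₐˣ (q(s)/z)·sin²φ(s) ds ) dx ]. -/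

import Mathlib

open Real Set

private lemma aux_K_nonneg (u : ℝ) : 0 ≤ (Real.exp (-(2 * u)) - 1) / 2 + u := by
  have := Real.add_one_le_exp (-(2 * u))
  linarith

/-- Lemma 3.2: lower bound for the weighted integral over a half-period
[φ⁻¹(iπ+π/2), φ⁻¹(iπ+π/2+D)] in terms of the Prüfer radius at the right endpoint. -/
theorem weighted_integral_lower_bound
    (x₀ : ℝ) (hx₀ : 0 < x₀)
    (q : ℝ → ℝ) (hqc : ContinuousOn q (Icc 0 x₀))
    (hqnonneg : ∀ x ∈ Icc 0 x₀, 0 ≤ q x)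
    (z : ℝ) (hz : 0 < z)
    (φ : ℝ → ℝ) (hφ0 : φ 0 = 0)
    (hφODE : ∀ x ∈ Icc 0 x₀, HasDerivAt φ (z - q x / z * Real.sin (φ x) ^ 2) x)
    (r : ℝ → ℝ)
    (hr : ∀ x, r x = Real.exp (∫ t in (0:ℝ)..x, q t / z * Real.sin (φ t) * Real.cos (φ t)))
    (i : ℕ) (D : ℝ) (hD : D ∈ Icc 0 π)
    (a b : ℝ) (ha : a ∈ Ioc 0 x₀) (hb : b ∈ Ioc 0 x₀) (hab : a ≤ b)
    (hφa : φ a = i * π + π / 2) (hφb : φ b = i * π + π / 2 + D) :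
    (∫ x in a..b, r x ^ 2 * (q x / z) *
        (Real.sin (φ x) ^ 2 - φ x * Real.sin (φ x) * Real.cos (φ x))) ≥
      r b ^ 2 *
        ((∫ x in a..b, (q x / z) *
            (Real.sin (φ x) ^ 2 - φ x * Real.sin (φ x) * Real.cos (φ x)))
          - 2 * ∫ x in a..b, (q x / z) * Real.sin (φ x) * Real.cos (φ x) *
              (∫ s in a..x, (q s / z) * Real.sin (φ s) ^ 2)) := by
  obtain ⟨ha0, hax⟩ := ha
  obtain ⟨hb0, hbx⟩ := hb
  have hsub : Icc a b ⊆ Icc 0 x₀ := Icc_subset_Icc ha0.le hbx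
  have huIcc : uIcc a b = Icc a b := uIcc_of_le hab
  -- clamp to [0, x₀]
  set c : ℝ → ℝ := fun x => max 0 (min x x₀) with hc
  have hcmem : ∀ x, c x ∈ Icc 0 x₀ := fun x =>
    ⟨le_max_left _ _, max_le hx₀.le (min_le_right x x₀)⟩
  have hccont : Continuous c := continuous_const.max (continuous_id.min continuous_const)
  have hcid : ∀ x ∈ Icc 0 x₀, c x = x := by
    intro x hx
    rw [hc]
    simp only
    rw [min_eq_left hx.2, max_eq_right hx.1]
  have hφcont : ContinuousOn φ (Icc 0 x₀) := fun x hx =>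
    ((hφODE x hx).continuousAt).continuousWithinAt
  -- extended functions
  set Q : ℝ → ℝ := fun x => q (c x) with hQ
  set Φ : ℝ → ℝ := fun x => φ (c x) with hΦ
  have hQcont : Continuous Q := hqc.comp_continuous hccont hcmem
  have hΦcont : Continuous Φ := hφcont.comp_continuous hccont hcmem
  set g : ℝ → ℝ := fun x => Q x / z * Real.sin (Φ x) * Real.cos (Φ x) with hg
  set p : ℝ → ℝ := fun x => Q x / z * Real.sin (Φ x) ^ 2 with hp
  have hgcont : Continuous g :=
    ((hQcont.div_const z).mul (Real.continuous_sin.comp hΦcont)).mul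
      (Real.continuous_cos.comp hΦcont)
  have hpcont : Continuous p :=
    (hQcont.div_const z).mul ((Real.continuous_sin.comp hΦcont).pow 2)
  have hpnonneg : ∀ x, 0 ≤ p x := fun x =>
    mul_nonneg (div_nonneg (hqnonneg _ (hcmem x)) hz.le) (sq_nonneg _)
  -- G and K
  set G : ℝ → ℝ := fun x => -∫ t in b..x, g t with hG
  have hGderiv : ∀ x, HasDerivAt G (-g x) x := fun x =>
    ((hgcont.integral_hasStrictDerivAt b x).hasDerivAt).neg
  have hGcont : Continuous G := continuous_iff_continuousAt.2 fun x => (hGderiv x).continuousAt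
  have hGb : G b = 0 := by rw [hG]; simp
  set K : ℝ → ℝ := fun x => (Real.exp (-(2 * G x)) - 1) / 2 + G x with hK
  have hKderiv : ∀ x, HasDerivAt K ((Real.exp (-(2 * G x)) - 1) * g x) x := by
    intro x
    have h1 : HasDerivAt (fun y => -(2 * G y)) (-(2 * -g x)) x := ((hGderiv x).const_mul 2).neg
    have h2 := h1.exp
    have h3 := ((h2.sub_const 1).div_const 2).add (hGderiv x)
    have he : (Real.exp (-(2 * G x)) - 1) * g x
        = Real.exp (-(2 * G x)) * -(2 * -g x) / 2 + -g x := by ring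
    rw [he]
    exact h3
  have hKcont : Continuous K := continuous_iff_continuousAt.2 fun x => (hKderiv x).continuousAt
  have hKnonneg : ∀ x, 0 ≤ K x := fun x => aux_K_nonneg (G x)
  have hKb : K b = 0 := by rw [hK]; simp [hGb]
  -- the exp factor
  have hexpcont : Continuous fun x => Real.exp (-(2 * G x)) :=
    Real.continuous_exp.comp ((continuous_const.mul hGcont).neg)
  -- r squared in terms of G
  have hrsq : ∀ x ∈ Icc 0 x₀, r x ^ 2 = r b ^ 2 * Real.exp (-(2 * G x)) := by
    intro x hx
    have c1 : (∫ t in (0:ℝ)..x, q t / z * Real.sin (φ t) * Real.cos (φ t))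
        = ∫ t in (0:ℝ)..x, g t := by
      apply intervalIntegral.integral_congr
      intro t ht
      rw [uIcc_of_le hx.1] at ht
      have ht' : t ∈ Icc 0 x₀ := ⟨ht.1, ht.2.trans hx.2⟩
      simp only [hg, hQ, hΦ, hcid t ht']
    have c1b : (∫ t in (0:ℝ)..b, q t / z * Real.sin (φ t) * Real.cos (φ t))
        = ∫ t in (0:ℝ)..b, g t := by
      apply intervalIntegral.integral_congr
      intro t ht
      rw [uIcc_of_le hb0.le] at ht
      have ht' : t ∈ Icc 0 x₀ := ⟨ht.1, ht.2.trans hbx⟩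
      simp only [hg, hQ, hΦ, hcid t ht']
    have c2 : (∫ t in (0:ℝ)..b, g t) + ∫ t in b..x, g t = ∫ t in (0:ℝ)..x, g t :=
      intervalIntegral.integral_add_adjacent_intervals (hgcont.intervalIntegrable _ _)
        (hgcont.intervalIntegrable _ _)
    rw [hr x, hr b, c1, c1b, sq, sq, ← Real.exp_add, ← Real.exp_add, ← Real.exp_add, ← c2, hG]
    congr 1
    simp only
    ring
  -- P
  set P : ℝ → ℝ := fun x => ∫ s in a..x, p s with hP
  have hPderiv : ∀ x, HasDerivAt P (p x) x := fun x =>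
    (hpcont.integral_hasStrictDerivAt a x).hasDerivAt
  have hPcont : Continuous P := continuous_iff_continuousAt.2 fun x => (hPderiv x).continuousAt
  have hPa : P a = 0 := by rw [hP]; simp
  -- rewrite the three integrals in the goal
  have hC1 : (∫ x in a..b, r x ^ 2 * (q x / z) *
        (Real.sin (φ x) ^ 2 - φ x * Real.sin (φ x) * Real.cos (φ x)))
      = r b ^ 2 * ∫ x in a..b, Real.exp (-(2 * G x)) * (p x - Φ x * g x) := by
    rw [← intervalIntegral.integral_const_mul]
    apply intervalIntegral.integral_congr
    intro x hx
    rw [huIcc] at hx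
    have hx' := hsub hx
    simp only [hp, hg, hΦ, hQ, hcid x hx']
    rw [hrsq x hx']
    ring
  have hC2 : (∫ x in a..b, (q x / z) *
        (Real.sin (φ x) ^ 2 - φ x * Real.sin (φ x) * Real.cos (φ x)))
      = ∫ x in a..b, (p x - Φ x * g x) := by
    apply intervalIntegral.integral_congr
    intro x hx
    rw [huIcc] at hx
    have hx' := hsub hx
    simp only [hp, hg, hΦ, hQ, hcid x hx']
    ring
  have hC3 : (∫ x in a..b, (q x / z) * Real.sin (φ x) * Real.cos (φ x) *
        (∫ s in a..x, (q s / z) * Real.sin (φ s) ^ 2))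
      = ∫ x in a..b, P x * g x := by
    apply intervalIntegral.integral_congr
    intro x hx
    rw [huIcc] at hx
    have hx' := hsub hx
    have hinner : (∫ s in a..x, (q s / z) * Real.sin (φ s) ^ 2) = P x := by
      rw [hP]
      apply intervalIntegral.integral_congr
      intro s hs
      rw [uIcc_of_le hx.1] at hs
      have hs' : s ∈ Icc 0 x₀ := ⟨le_trans ha0.le hs.1, le_trans hs.2 hx'.2⟩
      simp only [hp, hQ, hΦ, hcid s hs']
    simp only
    rw [hinner]
    simp only [hg, hQ, hΦ, hcid x hx']
    ring
  rw [hC1, hC2, hC3, ge_iff_le]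
  apply mul_le_mul_of_nonneg_left ?_ (sq_nonneg (r b))
  -- now a statement about I₁, I₂, I₃
  -- integration by parts 1 : ∫ P g = ∫ p G
  have hI3 : (∫ x in a..b, P x * g x) = ∫ x in a..b, p x * G x := by
    have hu : ∀ x ∈ uIcc a b, HasDerivAt P (p x) x := fun x _ => hPderiv x
    have hv : ∀ x ∈ uIcc a b, HasDerivAt (fun y => -G y) (g x) x := fun x _ => by
      have h0 := (hGderiv x).neg
      rw [neg_neg] at h0
      exact h0
    have h := intervalIntegral.integral_mul_deriv_eq_deriv_mul hu hv
      (hpcont.intervalIntegrable a b) (hgcont.intervalIntegrable a b)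
    beta_reduce at h
    rw [hGb, hPa] at h
    simp only [neg_zero, mul_zero, zero_mul, sub_zero, zero_sub, mul_neg,
      intervalIntegral.integral_neg, neg_neg] at h
    exact h
  -- integration by parts 2
  have hparts2 : (∫ x in a..b, Φ x * ((Real.exp (-(2 * G x)) - 1) * g x))
      = -(φ a * K a) - (z * (∫ x in a..b, K x) - ∫ x in a..b, p x * K x) := by
    have hcong : (∫ x in a..b, Φ x * ((Real.exp (-(2 * G x)) - 1) * g x))
        = ∫ x in a..b, φ x * ((Real.exp (-(2 * G x)) - 1) * g x) := by
      apply intervalIntegral.integral_congr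
      intro x hx
      rw [huIcc] at hx
      have hx' := hsub hx
      simp only [hΦ, hcid x hx']
    have hu : ∀ x ∈ uIcc a b, HasDerivAt φ (z - p x) x := by
      intro x hx
      rw [huIcc] at hx
      have hx' := hsub hx
      have hval : z - p x = z - q x / z * Real.sin (φ x) ^ 2 := by
        simp only [hp, hQ, hΦ, hcid x hx']
      rw [hval]
      exact hφODE x hx'
    have hv : ∀ x ∈ uIcc a b, HasDerivAt K ((Real.exp (-(2 * G x)) - 1) * g x) x :=
      fun x _ => hKderiv x
    have hu'int : IntervalIntegrable (fun x => z - p x) MeasureTheory.volume a b :=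
      (continuous_const.sub hpcont).intervalIntegrable a b
    have hv'int : IntervalIntegrable (fun x => (Real.exp (-(2 * G x)) - 1) * g x)
        MeasureTheory.volume a b :=
      ((hexpcont.sub continuous_const).mul hgcont).intervalIntegrable a b
    have h := intervalIntegral.integral_mul_deriv_eq_deriv_mul hu hv hu'int hv'int
    beta_reduce at h
    rw [hKb] at h
    have hsplit : (∫ x in a..b, (z - p x) * K x)
        = z * (∫ x in a..b, K x) - ∫ x in a..b, p x * K x := by
      rw [← intervalIntegral.integral_const_mul, ← intervalIntegral.integral_sub
        (by exact (continuous_const.mul hKcont).intervalIntegrable a b :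
          IntervalIntegrable (fun x => z * K x) MeasureTheory.volume a b)
        (by exact (hpcont.mul hKcont).intervalIntegrable a b :
          IntervalIntegrable (fun x => p x * K x) MeasureTheory.volume a b)]
      apply intervalIntegral.integral_congr
      intro x _
      ring
    rw [hcong, h, hsplit]
    ring
  -- linear combination identity
  have hE1 : (∫ x in a..b, Real.exp (-(2 * G x)) * (p x - Φ x * g x))
        - (∫ x in a..b, (p x - Φ x * g x)) + 2 * (∫ x in a..b, p x * G x)
      = 2 * (∫ x in a..b, p x * K x)
        - ∫ x in a..b, Φ x * ((Real.exp (-(2 * G x)) - 1) * g x) := by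
    have i1 : IntervalIntegrable (fun x => Real.exp (-(2 * G x)) * (p x - Φ x * g x))
        MeasureTheory.volume a b :=
      (hexpcont.mul (hpcont.sub (hΦcont.mul hgcont))).intervalIntegrable a b
    have i2 : IntervalIntegrable (fun x => (p x - Φ x * g x)) MeasureTheory.volume a b :=
      (hpcont.sub (hΦcont.mul hgcont)).intervalIntegrable a b
    have i4 : IntervalIntegrable (fun x => (2:ℝ) * (p x * G x)) MeasureTheory.volume a b :=
      (continuous_const.mul (hpcont.mul hGcont)).intervalIntegrable a b
    have i5 : IntervalIntegrable (fun x => (2:ℝ) * (p x * K x)) MeasureTheory.volume a b :=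
      (continuous_const.mul (hpcont.mul hKcont)).intervalIntegrable a b
    have i6 : IntervalIntegrable (fun x => Φ x * ((Real.exp (-(2 * G x)) - 1) * g x))
        MeasureTheory.volume a b :=
      (hΦcont.mul ((hexpcont.sub continuous_const).mul hgcont)).intervalIntegrable a b
    rw [← intervalIntegral.integral_const_mul, ← intervalIntegral.integral_sub i1 i2,
      ← intervalIntegral.integral_add (i1.sub i2) i4,
      ← intervalIntegral.integral_const_mul, ← intervalIntegral.integral_sub i5 i6]
    apply intervalIntegral.integral_congr
    intro x _
    simp only [hK]
    ring
  -- nonnegativity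
  have hKpos : 0 ≤ ∫ x in a..b, K x :=
    intervalIntegral.integral_nonneg hab fun x _ => hKnonneg x
  have hpKpos : 0 ≤ ∫ x in a..b, p x * K x :=
    intervalIntegral.integral_nonneg hab fun x _ => mul_nonneg (hpnonneg x) (hKnonneg x)
  have hφa0 : 0 ≤ φ a := by
    rw [hφa]
    have := Real.pi_pos
    positivity
  have hφaKa : 0 ≤ φ a * K a := mul_nonneg hφa0 (hKnonneg a)
  have hzK : 0 ≤ z * ∫ x in a..b, K x := mul_nonneg hz.le hKpos
  linarith only [hE1, hI3, hparts2, hpKpos, hφaKa, hzK]
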